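/- Let θ ∈ (0,π)³ with θ₁+θ₂+θ₃ ∈ πℤ and exactly two of the angles equal (say θ₁ = θ₂ ≠ θ₃). Then the stabilizer in SU(3) of the ordered pair (V₀, V_θ) is the group {diag(A, det A) : A ∈ O(2)}, which is isomorphic to O(2). -/

import Mathlib

open scoped Real ComplexConjugate
open Finset

/-- The standard real subspace `V₀ = ℝⁿ ⊂ ℂⁿ`, the real span of the standard basis. -/
noncomputable def V0 (n : ℕ) : Submodule ℝ (Fin n → ℂ) :=
  Submodule.span ℝ (Set.range fun j => (Pi.single j 1 : Fin n → ℂ))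

/-- The plane `V_θ = {(e^{iθ₁}x₁, …, e^{iθₙ}xₙ) : xⱼ ∈ ℝ}`, i.e. the real span of the vectors
`e^{iθⱼ} eⱼ`. -/
noncomputable def Vtheta (n : ℕ) (θ : Fin n → ℝ) : Submodule ℝ (Fin n → ℂ) :=
  Submodule.span ℝ (Set.range fun j => (Pi.single j (Complex.exp (θ j * Complex.I)) : Fin n → ℂ))

/-- The standard symplectic form `ω₀ = Im h` on `ℂⁿ`, `h` being the standard Hermitian metric. -/
noncomputable def omega0 {n : ℕ} (z w : Fin n → ℂ) : ℝ :=
  (∑ j, conj (z j) * w j).im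

/-- `ω₀` vanishes identically on `V`. -/
def OmegaVanishes {n : ℕ} (V : Submodule ℝ (Fin n → ℂ)) : Prop :=
  ∀ v ∈ V, ∀ w ∈ V, omega0 v w = 0

/-- `Im Ω₀` vanishes identically on `V`, where `Ω₀ = dz₁ ∧ ⋯ ∧ dzₙ` is the standard holomorphic
volume form: for any `n` vectors of `V` the determinant they span has vanishing imaginary part. -/
def ImVolVanishes {n : ℕ} (V : Submodule ℝ (Fin n → ℂ)) : Prop :=
  ∀ b : Fin n → (Fin n → ℂ), (∀ i, b i ∈ V) → ((Matrix.of fun i j => b i j).det).im = 0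

/-- A real `n`-dimensional subspace of `ℂⁿ` is special Lagrangian if `ω₀` and `Im Ω₀` vanish
identically on it. -/
def IsSpecialLagrangian (n : ℕ) (V : Submodule ℝ (Fin n → ℂ)) : Prop :=
  Module.finrank ℝ V = n ∧ OmegaVanishes V ∧ ImVolVanishes V


/-- The action of a complex `n×n` matrix on `ℂⁿ`, as a real-linear map. -/
noncomputable def actL {n : ℕ} (M : Matrix (Fin n) (Fin n) ℂ) :
    (Fin n → ℂ) →ₗ[ℝ] (Fin n → ℂ) :=
  (Matrix.mulVecLin M).restrictScalars ℝ

lemma actL_mul {n : ℕ} (M N : Matrix (Fin n) (Fin n) ℂ) :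
    actL (M * N) = (actL M).comp (actL N) := by
  ext v
  simp [actL, Matrix.mulVecLin_mul]

lemma actL_one {n : ℕ} : actL (1 : Matrix (Fin n) (Fin n) ℂ) = LinearMap.id := by
  ext v
  simp [actL]

/-- The stabilizer in `SU(3)` of the ordered pair of subspaces `(V₀, V_θ)`, realized as a
subgroup of the unitary group `U(3)` (its elements have determinant one, i.e. lie in `SU(3)`). -/
noncomputable def stabSU (θ : Fin 3 → ℝ) : Subgroup (Matrix.unitaryGroup (Fin 3) ℂ) where
  carrier := {B | (B : Matrix (Fin 3) (Fin 3) ℂ).det = 1 ∧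
    Submodule.map (actL (B : Matrix (Fin 3) (Fin 3) ℂ)) (V0 3) = V0 3 ∧
    Submodule.map (actL (B : Matrix (Fin 3) (Fin 3) ℂ)) (Vtheta 3 θ) = Vtheta 3 θ}
  one_mem' := by
    refine ⟨by simp, ?_, ?_⟩ <;>
      simp [actL_one, Submodule.map_id, OneMemClass.coe_one]
  mul_mem' := by
    rintro a b ⟨ha1, ha2, ha3⟩ ⟨hb1, hb2, hb3⟩
    refine ⟨by simp [MulMemClass.coe_mul, Matrix.det_mul, ha1, hb1], ?_, ?_⟩
    · rw [MulMemClass.coe_mul, actL_mul, Submodule.map_comp, hb2, ha2]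
    · rw [MulMemClass.coe_mul, actL_mul, Submodule.map_comp, hb3, ha3]
  inv_mem' := by
    rintro a ⟨ha1, ha2, ha3⟩
    have hinv : ((a⁻¹ : Matrix.unitaryGroup (Fin 3) ℂ) : Matrix (Fin 3) (Fin 3) ℂ) *
        (a : Matrix (Fin 3) (Fin 3) ℂ) = 1 := by
      rw [← MulMemClass.coe_mul, inv_mul_cancel, OneMemClass.coe_one]
    have hdet : ((a⁻¹ : Matrix.unitaryGroup (Fin 3) ℂ) : Matrix (Fin 3) (Fin 3) ℂ).det = 1 := by
      have := congrArg Matrix.det hinv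
      rw [Matrix.det_mul, ha1, mul_one, Matrix.det_one] at this
      exact this
    refine ⟨hdet, ?_, ?_⟩
    · conv_lhs => rw [← ha2]
      rw [← Submodule.map_comp, ← actL_mul, hinv, actL_one, Submodule.map_id]
    · conv_lhs => rw [← ha3]
      rw [← Submodule.map_comp, ← actL_mul, hinv, actL_one, Submodule.map_id]

/-- `SO(3)` as the subgroup of the orthogonal group `O(3)` of matrices of determinant one. -/
noncomputable def SO3 : Subgroup (Matrix.orthogonalGroup (Fin 3) ℝ) where
  carrier := {A | (A : Matrix (Fin 3) (Fin 3) ℝ).det = 1}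
  one_mem' := by simp
  mul_mem' := by
    intro a b ha hb
    simp only [Set.mem_setOf_eq, MulMemClass.coe_mul, Matrix.det_mul] at *
    rw [ha, hb, mul_one]
  inv_mem' := by
    intro a ha
    have hinv : ((a⁻¹ : Matrix.orthogonalGroup (Fin 3) ℝ) : Matrix (Fin 3) (Fin 3) ℝ) *
        (a : Matrix (Fin 3) (Fin 3) ℝ) = 1 := by
      rw [← MulMemClass.coe_mul, inv_mul_cancel, OneMemClass.coe_one]
    have := congrArg Matrix.det hinv
    simp only [Set.mem_setOf_eq] at *
    rw [Matrix.det_mul, ha, mul_one, Matrix.det_one] at this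
    exact this

/-- The block-diagonal matrix `diag(A, det A)` in `SO(3) ⊂ SU(3)`, with the `2×2` block `A`
acting on `span(e₁,e₂)` and `det A` on `e₃`. -/
noncomputable def embedO2 (A : Matrix (Fin 2) (Fin 2) ℝ) : Matrix (Fin 3) (Fin 3) ℂ :=
  (Matrix.reindex finSumFinEquiv finSumFinEquiv
    (Matrix.fromBlocks A (0 : Matrix (Fin 2) (Fin 1) ℝ) (0 : Matrix (Fin 1) (Fin 2) ℝ) (Matrix.of fun _ _ => A.det))).map (fun x => (x : ℂ))


/-! ### Auxiliary lemmas -/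

noncomputable def realSub (n : ℕ) : Submodule ℝ (Fin n → ℂ) where
  carrier := {v | ∀ j, (v j).im = 0}
  add_mem' := by intro a b ha hb j; simp [ha j, hb j]
  zero_mem' := by intro j; simp
  smul_mem' := by intro c v hv j; simp [Complex.smul_im, hv j]

lemma V0_eq (n : ℕ) : V0 n = realSub n := by
  apply le_antisymm
  · rw [V0, Submodule.span_le]
    rintro _ ⟨j, rfl⟩ k
    simp only [Pi.single_apply]
    split <;> simp
  · intro v hv
    have hv' : v = ∑ j, (v j).re • (Pi.single j 1 : Fin n → ℂ) := by
      ext k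
      rw [Finset.sum_apply]
      have : ∀ j, ((v j).re • (Pi.single j 1 : Fin n → ℂ)) k
          = (Pi.single j ((v j).re • (1:ℂ)) : Fin n → ℂ) k := by
        intro j; rw [← Pi.single_smul]
      rw [Finset.sum_congr rfl fun j _ => this j, Finset.sum_pi_single]
      simp only [Finset.mem_univ, if_true, smul_eq_mul, mul_one]
      exact (Complex.ext (by simp) (by simpa using (hv k).symm)).symm
    rw [hv']
    exact Submodule.sum_mem _ fun j _ => Submodule.smul_mem _ _
      (Submodule.subset_span ⟨j, rfl⟩)

lemma mem_V0_iff {n : ℕ} (v : Fin n → ℂ) : v ∈ V0 n ↔ ∀ j, (v j).im = 0 := by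
  rw [V0_eq]; rfl

lemma actL_apply {n : ℕ} (M : Matrix (Fin n) (Fin n) ℂ) (v : Fin n → ℂ) :
    actL M v = M.mulVec v := rfl

lemma map_V0 {n : ℕ} (M : Matrix (Fin n) (Fin n) ℂ) :
    Submodule.map (actL M) (V0 n) =
      Submodule.span ℝ (Set.range fun j => (fun i => M i j : Fin n → ℂ)) := by
  rw [V0, Submodule.map_span, ← Set.range_comp]
  congr 1
  ext v
  constructor
  · rintro ⟨j, rfl⟩; exact ⟨j, by simp [Function.comp, actL_apply]; rfl⟩
  · rintro ⟨j, rfl⟩; exact ⟨j, by simp [Function.comp, actL_apply]; rfl⟩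

lemma map_V0_le_iff {n : ℕ} (M : Matrix (Fin n) (Fin n) ℂ) :
    Submodule.map (actL M) (V0 n) ≤ V0 n ↔ ∀ i j, (M i j).im = 0 := by
  rw [map_V0, Submodule.span_le]
  constructor
  · intro h i j
    exact (mem_V0_iff _).1 (h ⟨j, rfl⟩) i
  · rintro h _ ⟨j, rfl⟩
    exact (mem_V0_iff _).2 fun i => h i j

lemma map_V0_eq_iff {n : ℕ} (M : Matrix (Fin n) (Fin n) ℂ)
    (hM : M ∈ Matrix.unitaryGroup (Fin n) ℂ) :
    Submodule.map (actL M) (V0 n) = V0 n ↔ ∀ i j, (M i j).im = 0 := by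
  constructor
  · intro h; exact (map_V0_le_iff M).1 h.le
  · intro h
    apply le_antisymm ((map_V0_le_iff M).2 h)
    have hstar : ∀ i j, ((star M : Matrix (Fin n) (Fin n) ℂ) i j).im = 0 := by
      intro i j
      simp only [Matrix.star_apply, Complex.star_def, Complex.conj_im, h j i, neg_zero]
    have h1 : M * star M = 1 := Matrix.mem_unitaryGroup_iff.1 hM
    calc V0 n = Submodule.map (actL (M * star M)) (V0 n) := by
          rw [h1, actL_one, Submodule.map_id]
      _ = Submodule.map (actL M) (Submodule.map (actL (star M)) (V0 n)) := by
          rw [actL_mul, Submodule.map_comp]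
      _ ≤ Submodule.map (actL M) (V0 n) :=
          Submodule.map_mono ((map_V0_le_iff _).2 hstar)

noncomputable def Dmat {n : ℕ} (θ : Fin n → ℝ) : Matrix (Fin n) (Fin n) ℂ :=
  Matrix.diagonal fun j => Complex.exp (θ j * Complex.I)

noncomputable def Emat {n : ℕ} (θ : Fin n → ℝ) : Matrix (Fin n) (Fin n) ℂ :=
  Matrix.diagonal fun j => Complex.exp (-(θ j) * Complex.I)

lemma Emat_mul_Dmat {n : ℕ} (θ : Fin n → ℝ) : Emat θ * Dmat θ = 1 := by
  rw [Emat, Dmat, Matrix.diagonal_mul_diagonal, ← Matrix.diagonal_one]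
  have : (fun j : Fin n => Complex.exp (-(θ j) * Complex.I) * Complex.exp (θ j * Complex.I))
      = fun _ => (1:ℂ) := by
    funext j; rw [← Complex.exp_add]; ring_nf; exact Complex.exp_zero
  rw [this]

lemma Dmat_mul_Emat {n : ℕ} (θ : Fin n → ℝ) : Dmat θ * Emat θ = 1 := by
  rw [Dmat, Emat, Matrix.diagonal_mul_diagonal, ← Matrix.diagonal_one]
  have : (fun j : Fin n => Complex.exp (θ j * Complex.I) * Complex.exp (-(θ j) * Complex.I))
      = fun _ => (1:ℂ) := by
    funext j; rw [← Complex.exp_add]; ring_nf; exact Complex.exp_zero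
  rw [this]

lemma star_Dmat {n : ℕ} (θ : Fin n → ℝ) : star (Dmat θ) = Emat θ := by
    rw [Dmat, Emat, Matrix.star_eq_conjTranspose, Matrix.diagonal_conjTranspose]
    have : (star fun j : Fin n => Complex.exp (θ j * Complex.I))
        = fun j : Fin n => Complex.exp (-(θ j) * Complex.I) := by
      funext j
      rw [Pi.star_apply, Complex.star_def, ← Complex.exp_conj]
      congr 1
      simp [Complex.conj_I]
    rw [this]

lemma Dmat_unitary {n : ℕ} (θ : Fin n → ℝ) : Dmat θ ∈ Matrix.unitaryGroup (Fin n) ℂ := by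
  rw [Matrix.mem_unitaryGroup_iff, star_Dmat, Dmat_mul_Emat]

lemma Vtheta_eq_map {n : ℕ} (θ : Fin n → ℝ) :
    Vtheta n θ = Submodule.map (actL (Dmat θ)) (V0 n) := by
  rw [V0, Vtheta, Submodule.map_span, ← Set.range_comp]
  congr 1
  ext v
  have key : ∀ j : Fin n, actL (Dmat θ) (Pi.single j 1) =
      (Pi.single j (Complex.exp (θ j * Complex.I)) : Fin n → ℂ) := by
    intro j
    rw [actL_apply, Dmat, Matrix.diagonal_mulVec_single, mul_one]
  constructor
  · rintro ⟨j, rfl⟩; exact ⟨j, (key j)⟩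
  · rintro ⟨j, rfl⟩; exact ⟨j, (key j).symm⟩

lemma map_Vtheta_eq_iff {n : ℕ} (θ : Fin n → ℝ) (M : Matrix (Fin n) (Fin n) ℂ)
    (hM : M ∈ Matrix.unitaryGroup (Fin n) ℂ) :
    Submodule.map (actL M) (Vtheta n θ) = Vtheta n θ ↔
      ∀ i j, ((Emat θ * M * Dmat θ) i j).im = 0 := by
  have hE : Emat θ ∈ Matrix.unitaryGroup (Fin n) ℂ := by
    rw [← star_Dmat]; exact Unitary.star_mem (Dmat_unitary θ)
  have hEMD : Emat θ * M * Dmat θ ∈ Matrix.unitaryGroup (Fin n) ℂ :=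
    mul_mem (mul_mem hE hM) (Dmat_unitary θ)
  rw [← map_V0_eq_iff _ hEMD, Vtheta_eq_map]
  have expand : ∀ N : Matrix (Fin n) (Fin n) ℂ,
      Submodule.map (actL (Emat θ * N * Dmat θ)) (V0 n)
        = Submodule.map (actL (Emat θ)) (Submodule.map (actL N)
            (Submodule.map (actL (Dmat θ)) (V0 n))) := by
    intro N
    rw [actL_mul, actL_mul, Submodule.map_comp, Submodule.map_comp]
  constructor
  · intro h
    rw [expand, h, ← Submodule.map_comp, ← actL_mul, Emat_mul_Dmat, actL_one,
      Submodule.map_id]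
  · intro h
    have h2 := congrArg (Submodule.map (actL (Dmat θ))) h
    rw [expand, ← Submodule.map_comp, ← Submodule.map_comp, ← actL_mul, ← actL_mul] at h2
    have e1 : Dmat θ * Emat θ * M = M := by
      rw [Dmat_mul_Emat, one_mul]
    rw [e1] at h2
    exact h2

lemma EMD_apply {n : ℕ} (θ : Fin n → ℝ) (M : Matrix (Fin n) (Fin n) ℂ) (i j : Fin n) :
    (Emat θ * M * Dmat θ) i j = M i j * Complex.exp ((θ j - θ i : ℝ) * Complex.I) := by
  rw [Emat, Dmat, Matrix.mul_diagonal, Matrix.diagonal_mul,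
    mul_comm (Complex.exp _) (M i j), mul_assoc, ← Complex.exp_add]
  congr 2
  push_cast
  ring

lemma im_EMD {n : ℕ} (θ : Fin n → ℝ) (M : Matrix (Fin n) (Fin n) ℂ) (i j : Fin n)
    (h : (M i j).im = 0) :
    ((Emat θ * M * Dmat θ) i j).im = (M i j).re * Real.sin (θ j - θ i) := by
  rw [EMD_apply, Complex.mul_im, h, zero_mul, add_zero,
    Complex.exp_ofReal_mul_I_im]

lemma embedO2_eq (A : Matrix (Fin 2) (Fin 2) ℝ) :
    embedO2 A = !![(A 0 0 : ℂ), A 0 1, 0; A 1 0, A 1 1, 0; 0, 0, (A.det : ℂ)] := by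
  ext i j
  fin_cases i <;> fin_cases j <;>
    simp [embedO2, Matrix.fromBlocks, finSumFinEquiv, Fin.addCases] <;>
    rfl

noncomputable def toO2 (M : Matrix (Fin 3) (Fin 3) ℂ) : Matrix (Fin 2) (Fin 2) ℝ :=
  Matrix.of fun i j => (M i.castSucc j.castSucc).re

lemma toO2_embedO2 (A : Matrix (Fin 2) (Fin 2) ℝ) : toO2 (embedO2 A) = A := by
  ext i j
  fin_cases i <;> fin_cases j <;> simp [toO2, embedO2_eq]

lemma embedO2_mul (A B : Matrix (Fin 2) (Fin 2) ℝ) :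
    embedO2 A * embedO2 B = embedO2 (A * B) := by
  rw [embedO2_eq, embedO2_eq, embedO2_eq]
  ext i j
  fin_cases i <;> fin_cases j <;>
    simp [Matrix.mul_apply, Fin.sum_univ_three, Fin.sum_univ_two, Matrix.det_fin_two] <;>
    push_cast <;> ring

lemma embedO2_one : embedO2 1 = 1 := by
  rw [embedO2_eq]
  ext i j
  fin_cases i <;> fin_cases j <;>
    simp [Matrix.one_apply, Matrix.det_fin_two, Matrix.vecHead, Matrix.vecTail]

lemma star_embedO2 (A : Matrix (Fin 2) (Fin 2) ℝ) : star (embedO2 A) = embedO2 A.transpose := by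
  rw [Matrix.star_eq_conjTranspose, embedO2_eq, embedO2_eq]
  ext i j
  fin_cases i <;> fin_cases j <;>
    simp [Matrix.conjTranspose_apply, Matrix.det_fin_two, Matrix.transpose_apply] <;>
    push_cast <;> ring

lemma orth_mul_transpose {A : Matrix (Fin 2) (Fin 2) ℝ}
    (hA : A ∈ Matrix.orthogonalGroup (Fin 2) ℝ) : A * A.transpose = 1 := by
  have h := (Matrix.mem_orthogonalGroup_iff (Fin 2) ℝ).1 hA
  simpa [Matrix.star_eq_conjTranspose] using h

lemma embedO2_unitary {A : Matrix (Fin 2) (Fin 2) ℝ}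
    (hA : A ∈ Matrix.orthogonalGroup (Fin 2) ℝ) :
    embedO2 A ∈ Matrix.unitaryGroup (Fin 3) ℂ := by
  rw [Matrix.mem_unitaryGroup_iff, star_embedO2, embedO2_mul, orth_mul_transpose hA, embedO2_one]

lemma det_embedO2 (A : Matrix (Fin 2) (Fin 2) ℝ) :
    (embedO2 A).det = ((A.det * A.det : ℝ) : ℂ) := by
  rw [embedO2_eq, Matrix.det_fin_three]
  simp [Matrix.det_fin_two]
  push_cast
  ring

lemma embedO2_injective : Function.Injective embedO2 := fun A B h => by
  rw [← toO2_embedO2 A, ← toO2_embedO2 B, h]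

lemma sin_ne_zero_of (x : ℝ) (h1 : -π < x) (h2 : x < π) (h3 : x ≠ 0) : Real.sin x ≠ 0 := by
  intro h
  rcases Real.sin_eq_zero_iff.1 h with ⟨n, hn⟩
  have hπ := Real.pi_pos
  have hl : (-1 : ℝ) < (n : ℝ) := by nlinarith
  have hr : ((n : ℝ)) < 1 := by nlinarith
  have : n = 0 := by
    have hl' : (-1 : ℤ) < n := by exact_mod_cast hl
    have hr' : n < 1 := by exact_mod_cast hr
    omega
  rw [this] at hn
  simp at hn
  exact h3 hn.symm

lemma stab_mem_char (θ : Fin 3 → ℝ) (B : Matrix.unitaryGroup (Fin 3) ℂ) :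
    B ∈ stabSU θ ↔ ((B : Matrix (Fin 3) (Fin 3) ℂ).det = 1 ∧
      (∀ i j, ((B : Matrix (Fin 3) (Fin 3) ℂ) i j).im = 0) ∧
      ∀ i j, ((B : Matrix (Fin 3) (Fin 3) ℂ) i j).re * Real.sin (θ j - θ i) = 0) := by
  have hmem : B ∈ stabSU θ ↔ ((B : Matrix (Fin 3) (Fin 3) ℂ).det = 1 ∧
      Submodule.map (actL (B : Matrix (Fin 3) (Fin 3) ℂ)) (V0 3) = V0 3 ∧
      Submodule.map (actL (B : Matrix (Fin 3) (Fin 3) ℂ)) (Vtheta 3 θ) = Vtheta 3 θ) := Iff.rfl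
  rw [hmem, map_V0_eq_iff _ B.2, map_Vtheta_eq_iff θ _ B.2]
  constructor
  · rintro ⟨h1, h2, h3⟩
    exact ⟨h1, h2, fun i j => by rw [← im_EMD θ _ i j (h2 i j)]; exact h3 i j⟩
  · rintro ⟨h1, h2, h3⟩
    exact ⟨h1, h2, fun i j => by rw [im_EMD θ _ i j (h2 i j)]; exact h3 i j⟩

/-- For `θ ∈ (0,π)³` with `Σθ ∈ πℤ` and exactly two angles equal
(`θ₁ = θ₂ ≠ θ₃`), the stabilizer in `SU(3)` of `(V₀, V_θ)` is exactly
`{diag(A, det A) : A ∈ O(2)}`, a group isomorphic to `O(2)`. -/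
theorem stabilizer_eq_O2 (θ : Fin 3 → ℝ)
    (hθ : ∀ j, θ j ∈ Set.Ioo (0 : ℝ) π)
    (hsum : ∃ k : ℤ, (∑ j, θ j) = k * π)
    (heq : θ 0 = θ 1) (hne : θ 1 ≠ θ 2) :
    ((stabSU θ : Set (Matrix.unitaryGroup (Fin 3) ℂ)) =
      {B : Matrix.unitaryGroup (Fin 3) ℂ | ∃ A ∈ Matrix.orthogonalGroup (Fin 2) ℝ,
        (B : Matrix (Fin 3) (Fin 3) ℂ) = embedO2 A}) ∧
    Nonempty (stabSU θ ≃* Matrix.orthogonalGroup (Fin 2) ℝ) := by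
  have hπ := Real.pi_pos
  have h0 := hθ 0
  have h1 := hθ 1
  have h2 := hθ 2
  have hne02 : θ 0 ≠ θ 2 := heq ▸ hne
  have hs20 : Real.sin (θ 2 - θ 0) ≠ 0 :=
    sin_ne_zero_of _ (by linarith [h0.2, h2.1]) (by linarith [h0.1, h2.2])
      (sub_ne_zero.2 (Ne.symm hne02))
  have hs02 : Real.sin (θ 0 - θ 2) ≠ 0 :=
    sin_ne_zero_of _ (by linarith [h2.2, h0.1]) (by linarith [h2.1, h0.2])
      (sub_ne_zero.2 hne02)
  have hs21 : Real.sin (θ 2 - θ 1) ≠ 0 :=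
    sin_ne_zero_of _ (by linarith [h1.2, h2.1]) (by linarith [h1.1, h2.2])
      (sub_ne_zero.2 (Ne.symm hne))
  have hs12 : Real.sin (θ 1 - θ 2) ≠ 0 :=
    sin_ne_zero_of _ (by linarith [h2.2, h1.1]) (by linarith [h2.1, h1.2])
      (sub_ne_zero.2 hne)
  have hsin10 : Real.sin (θ 1 - θ 0) = 0 := by rw [heq, sub_self, Real.sin_zero]
  have hsin01 : Real.sin (θ 0 - θ 1) = 0 := by rw [heq, sub_self, Real.sin_zero]
  have hset : (stabSU θ : Set (Matrix.unitaryGroup (Fin 3) ℂ)) =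
      {B : Matrix.unitaryGroup (Fin 3) ℂ | ∃ A ∈ Matrix.orthogonalGroup (Fin 2) ℝ,
        (B : Matrix (Fin 3) (Fin 3) ℂ) = embedO2 A} := by
    ext B
    rw [SetLike.mem_coe, stab_mem_char]
    constructor
    · rintro ⟨hdet, him, hz⟩
      set M : Matrix (Fin 3) (Fin 3) ℂ := (B : Matrix (Fin 3) (Fin 3) ℂ) with hMdef
      have hB : ∀ i j, M i j = ((M i j).re : ℂ) :=
        fun i j => Complex.ext rfl (by simp [him i j])
      have z02 : (M 0 2).re = 0 := (mul_eq_zero.1 (hz 0 2)).resolve_right hs20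
      have z12 : (M 1 2).re = 0 := (mul_eq_zero.1 (hz 1 2)).resolve_right hs21
      have z20 : (M 2 0).re = 0 := (mul_eq_zero.1 (hz 2 0)).resolve_right hs02
      have z21 : (M 2 1).re = 0 := (mul_eq_zero.1 (hz 2 1)).resolve_right hs12
      have hU : M * star M = 1 := Matrix.mem_unitaryGroup_iff.1 B.2
      have key : ∀ i k : Fin 3, (M i 0).re * (M k 0).re + (M i 1).re * (M k 1).re
          + (M i 2).re * (M k 2).re = if i = k then (1:ℝ) else 0 := by
        intro i k
        have e := congrFun (congrFun hU i) k
        rw [Matrix.mul_apply, Fin.sum_univ_three, Matrix.one_apply] at e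
        have er := congrArg Complex.re e
        simp only [Complex.add_re, Complex.mul_re, Matrix.star_apply, Complex.star_def,
          Complex.conj_re, Complex.conj_im, him, mul_zero, zero_mul, neg_zero, sub_zero,
          mul_neg, add_zero, apply_ite Complex.re, Complex.one_re, Complex.zero_re] at er
        exact er
      set A : Matrix (Fin 2) (Fin 2) ℝ :=
        !![(M 0 0).re, (M 0 1).re; (M 1 0).re, (M 1 1).re] with hAdef
      have k00 := key 0 0
      have k01 := key 0 1
      have k11 := key 1 1
      have k22 := key 2 2
      rw [z02] at k00 k01
      rw [z12] at k01 k11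
      rw [z20, z21] at k22
      norm_num at k00 k01 k11 k22
      have hAO : A ∈ Matrix.orthogonalGroup (Fin 2) ℝ := by
        rw [Matrix.mem_orthogonalGroup_iff]
        ext i k
        fin_cases i <;> fin_cases k <;>
          simp [hAdef, Matrix.mul_apply, Fin.sum_univ_two, Matrix.star_apply,
            Matrix.one_apply]
        · linarith [k00]
        · linarith [k01]
        · linarith [k01]
        · linarith [k11]
      have hda : A.det * (M 2 2).re = 1 := by
        have e := hdet
        rw [Matrix.det_fin_three] at e
        rw [hB 0 0, hB 0 1, hB 0 2, hB 1 0, hB 1 1, hB 1 2, hB 2 0, hB 2 1, hB 2 2,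
          z02, z12, z20, z21] at e
        have er : (M 0 0).re * (M 1 1).re * (M 2 2).re - (M 0 0).re * 0 * 0
            - (M 0 1).re * (M 1 0).re * (M 2 2).re + (M 0 1).re * 0 * 0
            + 0 * (M 1 0).re * 0 - 0 * (M 1 1).re * 0 = 1 := by
          exact_mod_cast e
        have hdetA : A.det = (M 0 0).re * (M 1 1).re - (M 0 1).re * (M 1 0).re := by
          rw [hAdef, Matrix.det_fin_two]
          simp
        rw [hdetA]
        linear_combination er
      have h22 : (M 2 2).re = A.det := by
        linear_combination A.det * k22 - (M 2 2).re * hda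
      refine ⟨A, hAO, ?_⟩
      show M = embedO2 A
      rw [embedO2_eq]
      ext i j
      fin_cases i <;> fin_cases j
      · simpa [hAdef] using hB 0 0
      · simpa [hAdef] using hB 0 1
      · exact Complex.ext (by simpa using z02) (by simpa using him 0 2)
      · simpa [hAdef] using hB 1 0
      · simpa [hAdef] using hB 1 1
      · exact Complex.ext (by simpa using z12) (by simpa using him 1 2)
      · exact Complex.ext (by simpa using z20) (by simpa using him 2 0)
      · exact Complex.ext (by simpa using z21) (by simpa using him 2 1)
      · show M 2 2 = !![(A 0 0 : ℂ), A 0 1, 0; A 1 0, A 1 1, 0; 0, 0, (A.det : ℂ)] 2 2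
        rw [hB 2 2, h22]
        simp
    · rintro ⟨A, hAO, hBA⟩
      have hd : A.det * A.det = 1 := by
        have h := congrArg Matrix.det (orth_mul_transpose hAO)
        rwa [Matrix.det_mul, Matrix.det_transpose, Matrix.det_one] at h
      refine ⟨?_, ?_, ?_⟩
      · rw [hBA, det_embedO2, hd]
        exact Complex.ofReal_one
      · intro i j
        rw [hBA, embedO2_eq]
        fin_cases i <;> fin_cases j <;> simp
      · intro i j
        rw [hBA, embedO2_eq]
        fin_cases i <;> fin_cases j <;>
          simp [hsin01, hsin10, sub_self]
  refine ⟨hset, ?_⟩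
  have hstabmem : ∀ A : Matrix.orthogonalGroup (Fin 2) ℝ,
      (⟨embedO2 ↑A, embedO2_unitary A.2⟩ : Matrix.unitaryGroup (Fin 3) ℂ) ∈ stabSU θ := by
    intro A
    rw [← SetLike.mem_coe, hset]
    exact ⟨↑A, A.2, rfl⟩
  let φ : Matrix.orthogonalGroup (Fin 2) ℝ →* stabSU θ :=
    { toFun := fun A => ⟨⟨embedO2 ↑A, embedO2_unitary A.2⟩, hstabmem A⟩
      map_one' := by
        apply Subtype.ext
        apply Subtype.ext
        show embedO2 ((1 : Matrix.orthogonalGroup (Fin 2) ℝ) : Matrix (Fin 2) (Fin 2) ℝ) = 1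
        rw [OneMemClass.coe_one, embedO2_one]
      map_mul' := by
        intro a b
        apply Subtype.ext
        apply Subtype.ext
        show embedO2 ((↑(a * b) : Matrix (Fin 2) (Fin 2) ℝ)) = embedO2 ↑a * embedO2 ↑b
        rw [MulMemClass.coe_mul, embedO2_mul] }
  have hinj : Function.Injective φ := by
    intro a b h
    have h2 : embedO2 ↑a = embedO2 ↑b :=
      congrArg (fun x : stabSU θ => ((x : Matrix.unitaryGroup (Fin 3) ℂ) :
        Matrix (Fin 3) (Fin 3) ℂ)) h
    exact Subtype.ext (embedO2_injective h2)
  have hsurj : Function.Surjective φ := by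
    intro B
    have hB : (↑B : Matrix.unitaryGroup (Fin 3) ℂ) ∈
        {B : Matrix.unitaryGroup (Fin 3) ℂ | ∃ A ∈ Matrix.orthogonalGroup (Fin 2) ℝ,
          (B : Matrix (Fin 3) (Fin 3) ℂ) = embedO2 A} := by
      rw [← hset]
      exact B.2
    obtain ⟨A, hA, hE⟩ := hB
    exact ⟨⟨A, hA⟩, Subtype.ext (Subtype.ext hE.symm)⟩
  exact ⟨(MulEquiv.ofBijective φ ⟨hinj, hsurj⟩).symm⟩
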